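/- Let (X,p) be a partial metric space, let I be a nontrivial admissible ideal of subsets of ℕ, let r ≥ 0, and let (a_n) and (b_n) be two sequences in X such that p(a_n, b_n) → 0 as n → ∞. If (a_n) is rough I-convergent to a point a ∈ X of roughness degree r and p(a_n, a_n) → 0 as n → ∞, then (b_n) is rough I-convergent to a of roughness degree r. -/

import Mathlib

/-- A partial metric on `X` (Matthews): nonnegativity with small self-distances,
indistancy implies equality, symmetry, and the modified triangle inequality. -/
structure IsPartialMetric {X : Type*} (p : X → X → ℝ) : Prop where
  self_nonneg : ∀ x : X, 0 ≤ p x x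
  self_le : ∀ x y : X, p x x ≤ p x y
  eq_iff : ∀ x y : X, x = y ↔ (p x x = p x y ∧ p x y = p y y)
  symm : ∀ x y : X, p x y = p y x
  triangle : ∀ x y z : X, p x y ≤ p x z + p z y - p z z

/-- An ideal of subsets of `ℕ`. -/
structure IsIdeal (I : Set (Set ℕ)) : Prop where
  empty_mem : (∅ : Set ℕ) ∈ I
  union_mem : ∀ A B : Set ℕ, A ∈ I → B ∈ I → A ∪ B ∈ I
  subset_mem : ∀ A B : Set ℕ, A ∈ I → B ⊆ A → B ∈ I

/-- A nontrivial admissible ideal of subsets of `ℕ`. -/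
structure IsAdmissibleIdeal (I : Set (Set ℕ)) extends IsIdeal I : Prop where
  univ_not_mem : (Set.univ : Set ℕ) ∉ I
  ne_empty_singleton : I ≠ {∅}
  singleton_mem : ∀ n : ℕ, ({n} : Set ℕ) ∈ I

/-- `(x n)` is rough `I`-convergent to `x₀` of roughness degree `r` w.r.t. the
partial metric `p`. -/
def RoughIdealConv {X : Type*} (I : Set (Set ℕ)) (p : X → X → ℝ)
    (x : ℕ → X) (r : ℝ) (x₀ : X) : Prop :=
  ∀ ε : ℝ, 0 < ε → {n : ℕ | r + ε ≤ |p (x n) x₀ - p x₀ x₀|} ∈ I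

theorem rough_ideal_conv_transfer
    {X : Type*} [Nonempty X] (p : X → X → ℝ) (hp : IsPartialMetric p)
    (I : Set (Set ℕ)) (hI : IsAdmissibleIdeal I)
    (r : ℝ) (hr : 0 ≤ r) (a b : ℕ → X)
    (hab : Filter.Tendsto (fun n => p (a n) (b n)) Filter.atTop (nhds 0))
    (x₀ : X) (ha : RoughIdealConv I p a r x₀)
    (haa : Filter.Tendsto (fun n => p (a n) (a n)) Filter.atTop (nhds 0)) :
    RoughIdealConv I p b r x₀ := by

  intro ε hε
  obtain ⟨N, hN⟩ := Metric.tendsto_atTop.mp hab (ε/2) (by positivity)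
  have hfin : ∀ M : ℕ, {n : ℕ | n < M} ∈ I := by
    intro M
    induction M with
    | zero => simpa using hI.empty_mem
    | succ M ih =>
      have : {n : ℕ | n < M + 1} = {n : ℕ | n < M} ∪ {M} := by
        ext n; simp [Nat.lt_succ_iff_lt_or_eq, or_comm, le_iff_eq_or_lt]
      rw [this]
      exact hI.union_mem _ _ ih (hI.singleton_mem M)
  have hU := hI.union_mem _ _ (ha (ε/2) (by positivity)) (hfin N)
  refine hI.subset_mem _ _ hU ?_
  intro n hn
  by_cases hnN : n < N
  · exact Or.inr hnN
  · left
    push_neg at hnN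
    have hd := hN n hnN
    rw [Real.dist_eq, sub_zero] at hd
    have h0 : 0 ≤ p (a n) (b n) := le_trans (hp.self_nonneg _) (hp.self_le _ _)
    rw [abs_of_nonneg h0] at hd
    have h1 : p (b n) x₀ ≤ p (b n) (a n) + p (a n) x₀ - p (a n) (a n) := hp.triangle _ _ _
    have h2 : p (a n) x₀ ≤ p (a n) (b n) + p (b n) x₀ - p (b n) (b n) := hp.triangle _ _ _
    have hsymm : p (b n) (a n) = p (a n) (b n) := hp.symm _ _
    have hbb : 0 ≤ p (b n) (b n) := hp.self_nonneg _
    have haa' : 0 ≤ p (a n) (a n) := hp.self_nonneg _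
    have hkey : |p (b n) x₀ - p (a n) x₀| ≤ p (a n) (b n) := by
      rw [abs_sub_le_iff]; constructor <;> linarith
    have hmem : r + ε ≤ |p (b n) x₀ - p x₀ x₀| := hn
    have habs : |p (b n) x₀ - p x₀ x₀| ≤ |p (b n) x₀ - p (a n) x₀| + |p (a n) x₀ - p x₀ x₀| :=
      abs_sub_le _ _ _
    show r + ε/2 ≤ |p (a n) x₀ - p x₀ x₀|
    linarith
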